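/- For every ρ ∈ (0, 1], the 4×4 complex matrix M(ρ) whose rows are r₁ = (1/(ρ²+1))·(−1, −1, 0, 2πi), r₂ = (ρ²/(ρ²+1))·(1 − (ρ²+1)²/ρ⁴, −1, 0, 2πi), r₃ = (ρ²/(ρ²+1))·(1, 1, 2πi, 0), and r₄ = (((ρ²+1)² − 1)/(ρ²+1))·(1, 1/(1 − (ρ²+1)²), 2πi, 0), has nonzero determinant (is invertible). -/

import Mathlib

open Real Complex

set_option maxHeartbeats 1000000

private lemma det_fin_four' (A : Matrix (Fin 4) (Fin 4) ℂ) :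
    A.det =
      A 0 0 * (A 1 1*A 2 2*A 3 3 - A 1 1*A 2 3*A 3 2 - A 1 2*A 2 1*A 3 3
        + A 1 2*A 2 3*A 3 1 + A 1 3*A 2 1*A 3 2 - A 1 3*A 2 2*A 3 1)
      - A 0 1 * (A 1 0*A 2 2*A 3 3 - A 1 0*A 2 3*A 3 2 - A 1 2*A 2 0*A 3 3
        + A 1 2*A 2 3*A 3 0 + A 1 3*A 2 0*A 3 2 - A 1 3*A 2 2*A 3 0)
      + A 0 2 * (A 1 0*A 2 1*A 3 3 - A 1 0*A 2 3*A 3 1 - A 1 1*A 2 0*A 3 3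
        + A 1 1*A 2 3*A 3 0 + A 1 3*A 2 0*A 3 1 - A 1 3*A 2 1*A 3 0)
      - A 0 3 * (A 1 0*A 2 1*A 3 2 - A 1 0*A 2 2*A 3 1 - A 1 1*A 2 0*A 3 2
        + A 1 1*A 2 2*A 3 0 + A 1 2*A 2 0*A 3 1 - A 1 2*A 2 1*A 3 0) := by
  rw [Matrix.det_succ_row_zero]
  simp [Fin.sum_univ_succ, Matrix.det_fin_three, Matrix.submatrix_apply, Fin.succAbove]
  ring

/-- The 4×4 block of the differential of the modified ligature map `L̂` at the
singly periodic Scherk boundary point `S_ρ` is invertible, for every `ρ ∈ (0, 1]`. -/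
theorem scherk_jacobian_block_invertible
    (ρ : ℝ) (hρ : ρ ∈ Set.Ioc (0:ℝ) 1) :
    (Matrix.det (!![
      (1 / ((ρ:ℂ)^2 + 1)) * (-1), (1 / ((ρ:ℂ)^2 + 1)) * (-1),
        (1 / ((ρ:ℂ)^2 + 1)) * 0, (1 / ((ρ:ℂ)^2 + 1)) * (2 * π * I);
      ((ρ:ℂ)^2 / ((ρ:ℂ)^2 + 1)) * (1 - ((ρ:ℂ)^2 + 1)^2 / (ρ:ℂ)^4),
        ((ρ:ℂ)^2 / ((ρ:ℂ)^2 + 1)) * (-1),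
        ((ρ:ℂ)^2 / ((ρ:ℂ)^2 + 1)) * 0, ((ρ:ℂ)^2 / ((ρ:ℂ)^2 + 1)) * (2 * π * I);
      ((ρ:ℂ)^2 / ((ρ:ℂ)^2 + 1)) * 1, ((ρ:ℂ)^2 / ((ρ:ℂ)^2 + 1)) * 1,
        ((ρ:ℂ)^2 / ((ρ:ℂ)^2 + 1)) * (2 * π * I), ((ρ:ℂ)^2 / ((ρ:ℂ)^2 + 1)) * 0;
      ((((ρ:ℂ)^2 + 1)^2 - 1) / ((ρ:ℂ)^2 + 1)) * 1,
        ((((ρ:ℂ)^2 + 1)^2 - 1) / ((ρ:ℂ)^2 + 1)) * (1 / (1 - ((ρ:ℂ)^2 + 1)^2)),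
        ((((ρ:ℂ)^2 + 1)^2 - 1) / ((ρ:ℂ)^2 + 1)) * (2 * π * I),
        ((((ρ:ℂ)^2 + 1)^2 - 1) / ((ρ:ℂ)^2 + 1)) * 0] : Matrix (Fin 4) (Fin 4) ℂ)) ≠ 0 := by
  have hρ0 : (0:ℝ) < ρ := hρ.1
  have hρ1 : ρ ≤ 1 := hρ.2
  have hrc : (ρ:ℂ) ≠ 0 := by exact_mod_cast hρ0.ne'
  have hρ4 : ((ρ:ℂ)^4) ≠ 0 := pow_ne_zero _ hrc
  have hρ2 : ((ρ:ℂ)^2) ≠ 0 := pow_ne_zero _ hrc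
  have hs1r : (0:ℝ) < ρ^2 + 1 := by positivity
  have hs1 : ((ρ:ℂ)^2 + 1) ≠ 0 := by
    have : ((ρ:ℂ)^2 + 1) = ((ρ^2 + 1 : ℝ) : ℂ) := by push_cast; ring
    rw [this]
    exact_mod_cast hs1r.ne'
  have ht : (1 - ((ρ:ℂ)^2 + 1)^2) ≠ 0 := by
    have h2 : (1:ℝ) < (ρ^2 + 1)^2 := by nlinarith
    have : (1 - ((ρ:ℂ)^2 + 1)^2) = (((1 - (ρ^2 + 1)^2 : ℝ)) : ℂ) := by push_cast; ring
    rw [this]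
    exact_mod_cast (sub_neg.mpr h2).ne
  have ht' : (((ρ:ℂ)^2 + 1)^2 - 1) ≠ 0 := by
    intro h
    apply ht
    rw [sub_eq_zero] at h ⊢
    exact h.symm
  have hπ : ((π:ℝ) : ℂ) ≠ 0 := by exact_mod_cast Real.pi_ne_zero
  have hnum : (1 + 2*(ρ:ℂ)^2 - (ρ:ℂ)^4) ≠ 0 := by
    have h2a : ρ^2 ≤ 1 := by nlinarith
    have h2b : ρ^4 ≤ ρ^2 := by nlinarith [sq_nonneg ρ]
    have h2 : (0:ℝ) < 1 + 2*ρ^2 - ρ^4 := by nlinarith [sq_nonneg ρ]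
    have : (1 + 2*(ρ:ℂ)^2 - (ρ:ℂ)^4) = (((1 + 2*ρ^2 - ρ^4 : ℝ)) : ℂ) := by push_cast; ring
    rw [this]
    exact_mod_cast h2.ne'
  set w : ℂ := 2 * (π:ℂ) * I with hw
  set v : Fin 4 → ℂ := ![1/((ρ:ℂ)^2+1), (ρ:ℂ)^2/(((ρ:ℂ)^2+1)*(ρ:ℂ)^4), (ρ:ℂ)^2/((ρ:ℂ)^2+1),
    (((ρ:ℂ)^2+1)^2-1)/(((ρ:ℂ)^2+1)*(1-((ρ:ℂ)^2+1)^2))] with hv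
  set B : Matrix (Fin 4) (Fin 4) ℂ := !![-1,-1,0,w;
    (ρ:ℂ)^4-((ρ:ℂ)^2+1)^2, -(ρ:ℂ)^4, 0, (ρ:ℂ)^4*w;
    1,1,w,0;
    1-((ρ:ℂ)^2+1)^2, 1, (1-((ρ:ℂ)^2+1)^2)*w, 0] with hB
  have hM : (!![
      (1 / ((ρ:ℂ)^2 + 1)) * (-1), (1 / ((ρ:ℂ)^2 + 1)) * (-1),
        (1 / ((ρ:ℂ)^2 + 1)) * 0, (1 / ((ρ:ℂ)^2 + 1)) * (2 * π * I);
      ((ρ:ℂ)^2 / ((ρ:ℂ)^2 + 1)) * (1 - ((ρ:ℂ)^2 + 1)^2 / (ρ:ℂ)^4),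
        ((ρ:ℂ)^2 / ((ρ:ℂ)^2 + 1)) * (-1),
        ((ρ:ℂ)^2 / ((ρ:ℂ)^2 + 1)) * 0, ((ρ:ℂ)^2 / ((ρ:ℂ)^2 + 1)) * (2 * π * I);
      ((ρ:ℂ)^2 / ((ρ:ℂ)^2 + 1)) * 1, ((ρ:ℂ)^2 / ((ρ:ℂ)^2 + 1)) * 1,
        ((ρ:ℂ)^2 / ((ρ:ℂ)^2 + 1)) * (2 * π * I), ((ρ:ℂ)^2 / ((ρ:ℂ)^2 + 1)) * 0;
      ((((ρ:ℂ)^2 + 1)^2 - 1) / ((ρ:ℂ)^2 + 1)) * 1,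
        ((((ρ:ℂ)^2 + 1)^2 - 1) / ((ρ:ℂ)^2 + 1)) * (1 / (1 - ((ρ:ℂ)^2 + 1)^2)),
        ((((ρ:ℂ)^2 + 1)^2 - 1) / ((ρ:ℂ)^2 + 1)) * (2 * π * I),
        ((((ρ:ℂ)^2 + 1)^2 - 1) / ((ρ:ℂ)^2 + 1)) * 0] : Matrix (Fin 4) (Fin 4) ℂ)
      = Matrix.of (fun i j => v i * B i j) := by
    ext i j
    fin_cases i <;> fin_cases j <;>
      simp only [hv, hB, hw, Matrix.of_apply, Matrix.cons_val', Matrix.cons_val_zero,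
        Matrix.cons_val_one, Matrix.head_cons, Matrix.empty_val', Matrix.cons_val_fin_one,
        Matrix.head_fin_const, Matrix.cons_val_two, Matrix.tail_cons, Matrix.cons_val_three, Fin.reduceFinMk, Fin.isValue] <;>
      field_simp <;> ring
  rw [hM, Matrix.det_mul_column]
  apply mul_ne_zero
  · rw [Fin.prod_univ_four]
    simp only [hv, Matrix.cons_val_zero, Matrix.cons_val_one, Matrix.head_cons,
      Matrix.cons_val_two, Matrix.tail_cons, Matrix.cons_val_three]
    exact mul_ne_zero (mul_ne_zero (mul_ne_zero
      (div_ne_zero one_ne_zero hs1)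
      (div_ne_zero hρ2 (mul_ne_zero hs1 hρ4)))
      (div_ne_zero hρ2 hs1))
      (div_ne_zero ht' (mul_ne_zero hs1 ht))
  · have hdetB : B.det = 4 * (π:ℂ)^2 * (1 + 2*(ρ:ℂ)^2 - (ρ:ℂ)^4) * ((ρ:ℂ)^2 + 1)^2 := by
      rw [hB, det_fin_four']
      simp only [Matrix.cons_val', Matrix.cons_val_zero, Matrix.cons_val_one, Matrix.head_cons,
        Matrix.empty_val', Matrix.cons_val_fin_one, Matrix.head_fin_const, Matrix.cons_val_two,
        Matrix.tail_cons, Matrix.cons_val_three, Matrix.of_apply, hw]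
      ring_nf
      simp only [Complex.I_sq]
      ring
    rw [hdetB]
    exact mul_ne_zero (mul_ne_zero (mul_ne_zero (by norm_num) (pow_ne_zero 2 hπ)) hnum)
      (pow_ne_zero 2 hs1)
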